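/- Let Γ be a graph and let w₁, …, w_m ∈ X_Γ* be a sequence of nonempty words such that there exists a perfect pairing on the index set {1, …, m}: each index i is paired with a unique index σ(i) ≠ i, σ(σ(i)) = i, satisfying (a) w_i · w_{σ(i)} ≡_Γ ε whenever i < σ(i), and (b) the pairing is non-crossing after allowing swaps: for paired (i, σ(i)) with i < σ(i), every index k with i < k < σ(i) has its partner σ(k) also in (i, σ(i)), or all letters of w_k are independent of all letters of w_i and w_{σ(i)}. Then w₁ w₂ ⋯ w_m ≡_Γ ε. -/

import Mathlib

/-- Letters `v⁺`/`v⁻` of the alphabet `X_Γ`. -/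
inductive Letter (V : Type) : Type
  | pos : V → Letter V
  | neg : V → Letter V
  deriving DecidableEq

/-- Underlying vertex of a letter. -/
def Letter.vert {V : Type} : Letter V → V
  | .pos v => v
  | .neg v => v

/-- Independence of letters induced by the adjacency relation `adj` of `Γ`:
`x I y` iff `x ≠ y` and the underlying vertices are adjacent. -/
def indep {V : Type} (adj : V → V → Prop) (x y : Letter V) : Prop :=
  x ≠ y ∧ adj x.vert y.vert

/-- A single rewriting step of the graph-monoid rewriting system:
cancel `v⁺v⁻`, cancel `v⁻v⁺` for looped `v`, or swap adjacent independent letters. -/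
inductive Step {V : Type} (adj : V → V → Prop) :
    List (Letter V) → List (Letter V) → Prop
  | cancel (a b : List (Letter V)) (v : V) :
      Step adj (a ++ [Letter.pos v, Letter.neg v] ++ b) (a ++ b)
  | cancelLoop (a b : List (Letter V)) (v : V) (h : adj v v) :
      Step adj (a ++ [Letter.neg v, Letter.pos v] ++ b) (a ++ b)
  | swap (a b : List (Letter V)) (x y : Letter V) (h : indep adj x y) :
      Step adj (a ++ [x, y] ++ b) (a ++ [y, x] ++ b)

/-- The congruence `≡_Γ` of the graph monoid `𝕄Γ`, as the equivalence closure of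
the context-closed rewriting steps. -/
def gequiv {V : Type} (adj : V → V → Prop) :
    List (Letter V) → List (Letter V) → Prop :=
  Relation.EqvGen (Step adj)

section lemmas
variable {V : Type} {adj : V → V → Prop}

lemma step_context {u v : List (Letter V)} (a b : List (Letter V))
    (h : Step adj u v) : Step adj (a ++ u ++ b) (a ++ v ++ b) := by
  cases h with
  | cancel a' b' w =>
      simpa [List.append_assoc] using Step.cancel (adj := adj) (a ++ a') (b' ++ b) w
  | cancelLoop a' b' w hw =>
      simpa [List.append_assoc] using Step.cancelLoop (adj := adj) (a ++ a') (b' ++ b) w hw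
  | swap a' b' x y hxy =>
      simpa [List.append_assoc] using Step.swap (adj := adj) (a ++ a') (b' ++ b) x y hxy

lemma gequiv_context {u v : List (Letter V)} (a b : List (Letter V))
    (h : gequiv adj u v) : gequiv adj (a ++ u ++ b) (a ++ v ++ b) := by
  induction h with
  | rel x y hs => exact Relation.EqvGen.rel _ _ (step_context a b hs)
  | refl x => exact Relation.EqvGen.refl _
  | symm x y _ ih => exact Relation.EqvGen.symm _ _ ih
  | trans x y z _ _ ih1 ih2 => exact Relation.EqvGen.trans _ _ _ ih1 ih2

lemma gequiv_letter (u : List (Letter V)) (y : Letter V)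
    (h : ∀ x ∈ u, indep adj x y) : gequiv adj (u ++ [y]) (y :: u) := by
  induction u with
  | nil => exact Relation.EqvGen.refl _
  | cons x u ih =>
    have h1 : gequiv adj (x :: (u ++ [y])) (x :: (y :: u)) := by
      simpa using gequiv_context [x] [] (ih (fun z hz => h z (List.mem_cons_of_mem _ hz)))
    have h2 : gequiv adj (x :: y :: u) (y :: x :: u) :=
      Relation.EqvGen.rel _ _ (by simpa using Step.swap (adj := adj) [] u x y (h x (by simp)))
    exact Relation.EqvGen.trans _ _ _ h1 h2

lemma gequiv_comm (u v : List (Letter V))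
    (h : ∀ x ∈ u, ∀ y ∈ v, indep adj x y) : gequiv adj (u ++ v) (v ++ u) := by
  induction v with
  | nil => simp; exact Relation.EqvGen.refl _
  | cons y v ih =>
    have h1 : gequiv adj ((u ++ [y]) ++ v) ((y :: u) ++ v) := by
      simpa using gequiv_context [] v (gequiv_letter u y fun x hx => h x hx y (by simp))
    have h2 : gequiv adj (y :: (u ++ v)) (y :: (v ++ u)) := by
      simpa using gequiv_context [y] []
        (ih fun x hx y' hy' => h x hx y' (List.mem_cons_of_mem _ hy'))
    have e : u ++ (y :: v) = (u ++ [y]) ++ v := by simp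
    rw [e]
    exact Relation.EqvGen.trans _ _ _ h1 h2

lemma aux (adj : V → V → Prop) (m : ℕ) (ws : Fin m → List (Letter V))
    (σ : Fin m → Fin m) :
    ∀ (n : ℕ) (L : List (Fin m)), L.length ≤ n →
      L.Pairwise (· < ·) →
      (∀ i ∈ L, σ i ∈ L) →
      (∀ i ∈ L, σ i ≠ i) →
      (∀ i ∈ L, σ (σ i) = i) →
      (∀ i ∈ L, i < σ i → gequiv adj (ws i ++ ws (σ i)) []) →
      (∀ i ∈ L, ∀ k ∈ L, i < σ i → i < k → k < σ i →
        ((i < σ k ∧ σ k < σ i) ∨ ∀ x ∈ ws k, ∀ y ∈ ws i ++ ws (σ i), indep adj x y)) →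
      gequiv adj (L.map ws).flatten [] := by
  intro n
  induction n with
  | zero =>
    intro L hL _ _ _ _ _ _
    have : L = [] := List.length_eq_zero_iff.mp (Nat.le_zero.mp hL)
    subst this
    exact Relation.EqvGen.refl _
  | succ n IH =>
    intro L hL hsort hmem hfix hinv ha hb
    rcases eq_or_ne L [] with rfl | hLne
    · exact Relation.EqvGen.refl _
    obtain ⟨i₀, hi₀⟩ := List.exists_mem_of_ne_nil L hLne
    -- the set of left endpoints of pairs
    classical
    set T : Finset (Fin m) := L.toFinset.filter (fun p => p < σ p) with hT
    have hTne : T.Nonempty := by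
      by_cases hc : i₀ < σ i₀
      · exact ⟨i₀, by simp [hT, hi₀, hc]⟩
      · refine ⟨σ i₀, ?_⟩
        have h1 : σ i₀ ∈ L := hmem i₀ hi₀
        have h2 : σ i₀ < σ (σ i₀) := by
          rw [hinv i₀ hi₀]
          exact lt_of_le_of_ne (not_lt.mp hc) (hfix i₀ hi₀)
        simp [hT, h1, h2]
    obtain ⟨i, hiT, hmin⟩ := T.exists_min_image (fun p => (σ p : ℕ) - p) hTne
    have hiL : i ∈ L := List.mem_toFinset.mp (Finset.mem_filter.mp hiT).1
    have hij : i < σ i := by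
      have := Finset.mem_filter.mp hiT
      simpa using this.2
    have hmin' : ∀ p ∈ L, p < σ p → ((σ i : ℕ) - i) ≤ (σ p : ℕ) - p := by
      intro p hp hpσ
      exact hmin p (by simp [hT, hp, hpσ])
    set j := σ i with hj
    have hjL : j ∈ L := hmem i hiL
    -- decompose L around i and j
    obtain ⟨P, B, rfl⟩ := List.append_of_mem hiL
    have hsort' := hsort
    rw [List.pairwise_append, List.pairwise_cons] at hsort'
    obtain ⟨hP, ⟨hiB, hBsort⟩, hPall⟩ := hsort'
    have hjB : j ∈ B := by
      rcases List.mem_append.mp hjL with hjP | hjB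
      · exact absurd (hPall j hjP i (by simp)) (asymm hij)
      · rcases List.mem_cons.mp hjB with hji | hjB
        · exact absurd hji (ne_of_gt hij)
        · exact hjB
    obtain ⟨Q, R, rfl⟩ := List.append_of_mem hjB
    rw [List.pairwise_append, List.pairwise_cons] at hBsort
    obtain ⟨hQ, ⟨hjR, hRsort⟩, hQall⟩ := hBsort
    -- order facts
    have hPlt : ∀ p ∈ P, p < i := fun p hp => hPall p hp i (by simp)
    have hQlt : ∀ q ∈ Q, i < q ∧ q < j :=
      fun q hq => ⟨hiB q (by simp [hq]), hQall q hq j (by simp)⟩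
    have hRlt : ∀ r ∈ R, j < r := fun r hr => hjR r hr
    have hmemL : ∀ k : Fin m, k ∈ P ∨ k ∈ Q ∨ k ∈ R → k ∈ P ++ i :: (Q ++ j :: R) := by
      intro k hk
      rcases hk with h | h | h <;> simp [h]
    -- independence for middle words
    have hQind : ∀ k ∈ Q, ∀ x ∈ ws k, ∀ y ∈ ws i ++ ws j, indep adj x y := by
      intro k hkQ
      have hkL : k ∈ P ++ i :: (Q ++ j :: R) := hmemL k (Or.inr (Or.inl hkQ))
      obtain ⟨hik, hkj⟩ := hQlt k hkQ
      rcases hb i hiL k hkL hij hik hkj with ⟨h1, h2⟩ | hind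
      · exfalso
        have hkL' : k ∈ P ++ i :: (Q ++ j :: R) := hkL
        by_cases hc : k < σ k
        · have hm := hmin' k hkL' hc
          have e1 : (i : ℕ) < σ k := h1
          have e2 : (σ k : ℕ) < j := h2
          have e3 : (i : ℕ) < k := hik
          have e4 : (k : ℕ) < σ k := hc
          have e5 : (i : ℕ) < j := hij
          omega
        · have hσkL : σ k ∈ P ++ i :: (Q ++ j :: R) := hmem k hkL
          have hk2 : σ (σ k) = k := hinv k hkL
          have hc2 : σ k < σ (σ k) := by
            rw [hk2]
            exact lt_of_le_of_ne (not_lt.mp hc) (hfix k hkL)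
          have hm := hmin' (σ k) hσkL hc2
          rw [hk2] at hm
          have e1 : (i : ℕ) < σ k := h1
          have e2 : (σ k : ℕ) < k := by rw [hk2] at hc2; exact hc2
          have e3 : (k : ℕ) < j := hkj
          have e5 : (i : ℕ) < j := hij
          omega
      · exact hind
    -- the gequiv chain
    set FP := (P.map ws).flatten with hFP
    set FQ := (Q.map ws).flatten with hFQ
    set FR := (R.map ws).flatten with hFR
    have e1 : ((P ++ i :: (Q ++ j :: R)).map ws).flatten
        = (FP ++ ws i) ++ (FQ ++ ws j) ++ FR := by
      simp [hFP, hFQ, hFR, List.append_assoc]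
    have c1 : gequiv adj (FQ ++ ws j) (ws j ++ FQ) := by
      apply gequiv_comm
      intro x hx y hy
      obtain ⟨l, hl, hxl⟩ := List.mem_flatten.mp hx
      obtain ⟨k, hkQ, rfl⟩ := List.mem_map.mp hl
      exact hQind k hkQ x hxl y (List.mem_append_right _ hy)
    have c2 : gequiv adj ((FP ++ ws i) ++ (FQ ++ ws j) ++ FR)
        ((FP ++ ws i) ++ (ws j ++ FQ) ++ FR) := gequiv_context _ _ c1
    have c3 : gequiv adj (FP ++ (ws i ++ ws j) ++ (FQ ++ FR)) (FP ++ [] ++ (FQ ++ FR)) :=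
      gequiv_context _ _ (ha i hiL hij)
    have c4 : gequiv adj ((FP ++ ws i) ++ (ws j ++ FQ) ++ FR)
        (FP ++ (FQ ++ FR)) := by
      have e : (FP ++ ws i) ++ (ws j ++ FQ) ++ FR = FP ++ (ws i ++ ws j) ++ (FQ ++ FR) := by
        simp [List.append_assoc]
      rw [e]
      simpa using c3
    -- apply IH to P ++ Q ++ R
    have hsub : List.Sublist (P ++ (Q ++ R)) (P ++ i :: (Q ++ j :: R)) := by
      refine List.Sublist.append_left ?_ P
      exact (List.Sublist.append_left (List.sublist_cons_self j R) Q).cons i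
    have hnotij : ∀ k : Fin m, k ∈ P ++ (Q ++ R) → k ≠ i ∧ k ≠ j := by
      intro k hk
      rcases List.mem_append.mp hk with h | h
      · have := hPlt k h
        constructor <;> intro hrfl <;> subst hrfl
        · exact absurd this (lt_irrefl _)
        · exact absurd (this.trans hij) (lt_irrefl _)
      · rcases List.mem_append.mp h with h | h
        · obtain ⟨h1, h2⟩ := hQlt k h
          exact ⟨ne_of_gt h1, ne_of_lt h2⟩
        · have := hRlt k h
          constructor <;> intro hrfl <;> subst hrfl
          · exact absurd (hij.trans this) (lt_irrefl _)
          · exact absurd this (lt_irrefl _)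
    have hmemL' : ∀ k ∈ P ++ (Q ++ R), k ∈ P ++ i :: (Q ++ j :: R) :=
      fun k hk => hsub.mem hk
    have hmem' : ∀ k ∈ P ++ (Q ++ R), σ k ∈ P ++ (Q ++ R) := by
      intro k hk
      have hkL := hmemL' k hk
      have hσL := hmem k hkL
      have hσne : σ k ≠ i ∧ σ k ≠ j := by
        constructor
        · intro hσi
          have : k = j := by
            rw [← hinv k hkL, hσi, ← hj]
          exact absurd this (hnotij k hk).2
        · intro hσj
          have : k = i := by
            rw [← hinv k hkL, hσj, hj]
            exact hinv i hiL
          exact absurd this (hnotij k hk).1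
      simp only [List.mem_append, List.mem_cons] at hσL ⊢
      rcases hσL with h | h | h
      · exact Or.inl h
      · exact absurd h hσne.1
      · rcases h with h | h | h
        · exact Or.inr (Or.inl h)
        · exact absurd h hσne.2
        · exact Or.inr (Or.inr h)
    have hlen : (P ++ (Q ++ R)).length ≤ n := by
      simp only [List.length_append, List.length_cons] at hL ⊢
      omega
    have c5 : gequiv adj (((P ++ (Q ++ R)).map ws).flatten) [] := by
      refine IH (P ++ (Q ++ R)) hlen (hsort.sublist hsub) hmem'
        (fun k hk => hfix k (hmemL' k hk)) (fun k hk => hinv k (hmemL' k hk))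
        (fun k hk => ha k (hmemL' k hk)) ?_
      intro a haM k hkM h1 h2 h3
      exact hb a (hmemL' a haM) k (hmemL' k hkM) h1 h2 h3
    have e2 : ((P ++ (Q ++ R)).map ws).flatten = FP ++ (FQ ++ FR) := by
      simp [hFP, hFQ, hFR]
    rw [e2] at c5
    rw [e1]
    exact Relation.EqvGen.trans _ _ _ c2 (Relation.EqvGen.trans _ _ _ c4 c5)

end lemmas

/-- if a sequence of nonempty words admits a fixed-point-free pairing
`σ` such that paired words cancel (`w_i w_{σ(i)} ≡_Γ ε`) and the pairing is
non-crossing up to independence, then the concatenation is `≡_Γ`-trivial. -/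
theorem paired_sequence_trivial {V : Type} (adj : V → V → Prop)
    (m : ℕ) (ws : Fin m → List (Letter V)) (hne : ∀ i, ws i ≠ [])
    (σ : Fin m → Fin m) (hfix : ∀ i, σ i ≠ i) (hinv : ∀ i, σ (σ i) = i)
    (ha : ∀ i, i < σ i → gequiv adj (ws i ++ ws (σ i)) [])
    (hb : ∀ i k : Fin m, i < σ i → i < k → k < σ i →
      ((i < σ k ∧ σ k < σ i) ∨
        ∀ x ∈ ws k, ∀ y ∈ ws i ++ ws (σ i), indep adj x y)) :
    gequiv adj (List.ofFn ws).flatten [] := by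
  have h := aux adj m ws σ (List.finRange m).length (List.finRange m) le_rfl
    (List.pairwise_lt_finRange m)
    (fun i _ => List.mem_finRange _)
    (fun i _ => hfix i) (fun i _ => hinv i)
    (fun i _ hi => ha i hi)
    (fun i _ k _ h1 h2 h3 => hb i k h1 h2 h3)
  rwa [← List.ofFn_eq_map] at h
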